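/- Let (x_n)_{n∈I} be a frame for H with canonical dual (y_n) and suppose E = {1} satisfies the MRC, i.e., ⟨y_1, x_1⟩ ≠ 1 after one erasure. Then the sequence v_n = y_n + (⟨y_n, x_1⟩ / (1 − ⟨y_1, x_1⟩)) y_1, n ≥ 2, is the canonical dual frame of (x_n)_{n≥2}. -/

import Mathlib

noncomputable section

variable {H : Type*} [NormedAddCommGroup H] [InnerProductSpace ℂ H] [CompleteSpace H]

/-- `(x n)_{n ∈ I}` is a frame for `H` with frame bounds `A`, `B`. -/
def IsFrameOn (x : ℕ → H) (I : Set ℕ) (A B : ℝ) : Prop :=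
  0 < A ∧ 0 < B ∧ ∀ h : H,
    Summable (fun n : I => ‖(inner ℂ (x n) h : ℂ)‖ ^ 2) ∧
    A * ‖h‖ ^ 2 ≤ ∑' n : I, ‖(inner ℂ (x n) h : ℂ)‖ ^ 2 ∧
    ∑' n : I, ‖(inner ℂ (x n) h : ℂ)‖ ^ 2 ≤ B * ‖h‖ ^ 2

/-- `(y n)_{n ∈ I}` is the canonical dual of `(x n)_{n ∈ I}`. -/
def IsCanonicalDualOn (y x : ℕ → H) (I : Set ℕ) : Prop :=
  ∃ S Sinv : H →L[ℂ] H,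
    (∀ h : H, HasSum (fun n : I => (inner ℂ (x n) h : ℂ) • x n) (S h)) ∧
    Sinv.comp S = ContinuousLinearMap.id ℂ H ∧
    S.comp Sinv = ContinuousLinearMap.id ℂ H ∧
    ∀ n ∈ I, y n = Sinv (x n)

/-- If `(y n)` is the canonical dual of the frame `(x n)_{n ∈ I}` and `E = {1}`
satisfies the MRC, then `v n = y n + (⟨y n, x 1⟩ / (1 − ⟨y 1, x 1⟩)) y 1`, `n ≥ 2`,
is the canonical dual frame of `(x n)_{n ≥ 2}`. -/
theorem stmt7 (x y : ℕ → H) (I : Set ℕ) (A B : ℝ) (hx : IsFrameOn x I A B)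
    (hy : IsCanonicalDualOn y x I) (h1 : (1 : ℕ) ∈ I) (hne : I ≠ {1})
    (hMRC : Dense ((Submodule.span ℂ (x '' (I \ {1})) : Submodule ℂ H) : Set H)) :
    IsCanonicalDualOn
      (fun n => y n +
        ((inner ℂ (x 1) (y n) : ℂ) / (1 - (inner ℂ (x 1) (y 1) : ℂ))) • y 1)
      x (I \ {1}) := by
  obtain ⟨S, Sinv, hS, hIS, hSI, hyx⟩ := hy
  set y₁ : H := Sinv (x 1) with hy₁
  set c : ℂ := inner ℂ (x 1) y₁ with hc
  have hSinvS : ∀ h : H, Sinv (S h) = h := fun h =>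
    congrFun (congrArg DFunLike.coe hIS) h
  have hSSinv : ∀ h : H, S (Sinv h) = h := fun h =>
    congrFun (congrArg DFunLike.coe hSI) h
  have hSy₁ : S y₁ = x 1 := hSSinv (x 1)
  -- the reduced frame operator
  set T : H →L[ℂ] H :=
    (ContinuousLinearMap.toSpanSingleton ℂ (x 1)).comp ((innerSL ℂ) (x 1)) with hT
  set S' : H →L[ℂ] H := S - T with hS'def
  have hTapp : ∀ h : H, T h = (inner ℂ (x 1) h : ℂ) • x 1 := by
    intro h; simp [hT, ContinuousLinearMap.toSpanSingleton_apply]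
  -- the partial sums over `I \ {1}`
  have hS' : ∀ h : H,
      HasSum (fun n : (I \ {1} : Set ℕ) => (inner ℂ (x n) h : ℂ) • x n) (S' h) := by
    intro h
    set f : ℕ → H := fun n => (inner ℂ (x n) h : ℂ) • x n with hf
    have hsum : HasSum (f ∘ ((↑) : I → ℕ)) (S h) := hS h
    rw [hasSum_subtype_iff_indicator] at hsum
    have hone : HasSum (({1} : Set ℕ).indicator f) (f 1) := by
      have heq : ({1} : Set ℕ).indicator f = fun n => if n = 1 then f 1 else 0 := by
        funext n
        by_cases hn : n = 1 <;> simp [Set.indicator, hn]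
      rw [heq]; exact hasSum_ite_eq 1 (f 1)
    have hdec : I.indicator f =
        (I \ {1} : Set ℕ).indicator f + ({1} : Set ℕ).indicator f := by
      funext n
      by_cases hn : n = 1
      · subst hn; simp [Set.indicator, h1]
      · by_cases hnI : n ∈ I <;> simp [Set.indicator, hn, hnI]
    have hsub := hsum.sub hone
    rw [hdec] at hsub
    have h3 : HasSum ((I \ {1} : Set ℕ).indicator f) (S h - f 1) := by
      have key : (fun b => ((I \ {1} : Set ℕ).indicator f +
          ({1} : Set ℕ).indicator f) b - ({1} : Set ℕ).indicator f b)
          = (I \ {1} : Set ℕ).indicator f := by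
        funext n; simp
      rwa [key] at hsub
    have h4 : HasSum (f ∘ ((↑) : (I \ {1} : Set ℕ) → ℕ)) (S h - f 1) :=
      hasSum_subtype_iff_indicator.mpr h3
    have h5 : HasSum (fun n : (I \ {1} : Set ℕ) => (inner ℂ (x n) h : ℂ) • x n)
        (S h - f 1) := h4
    have hval : S' h = S h - f 1 := by
      simp [hS'def, hTapp, hf]
    rw [hval]
    exact h5
  -- `c ≠ 1` via the MRC
  have hc1 : c ≠ 1 := by
    intro hceq
    have hS'y₁ : S' y₁ = 0 := by
      have h0 : S' y₁ = S y₁ - (inner ℂ (x 1) y₁ : ℂ) • x 1 := by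
        simp [hS'def, hTapp]
      rw [h0, hSy₁, ← hc, hceq, one_smul, sub_self]
    have horth : ∀ n ∈ (I \ {1} : Set ℕ), (inner ℂ (x n) y₁ : ℂ) = 0 := by
      have hsum := hS' y₁
      rw [hS'y₁] at hsum
      have hsum2 : HasSum
          (fun n : (I \ {1} : Set ℕ) =>
            (inner ℂ (x n) y₁ : ℂ) * (inner ℂ y₁ (x n) : ℂ)) 0 := by
        have := ((innerSL ℂ) y₁).hasSum hsum
        simpa using this
      have hsum3 : HasSum
          (fun n : (I \ {1} : Set ℕ) => (‖(inner ℂ (x n) y₁ : ℂ)‖ ^ 2 : ℝ)) 0 := by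
        have hre := (Complex.reCLM).hasSum hsum2
        have heq : (fun n : (I \ {1} : Set ℕ) =>
            Complex.reCLM ((inner ℂ (x n) y₁ : ℂ) * (inner ℂ y₁ (x n) : ℂ)))
            = fun n : (I \ {1} : Set ℕ) => (‖(inner ℂ (x n) y₁ : ℂ)‖ ^ 2 : ℝ) := by
          funext n
          rw [← inner_conj_symm y₁ (x (n : ℕ)), Complex.mul_conj]
          simp [Complex.normSq_eq_norm_sq, ← Complex.ofReal_pow]
        rw [heq] at hre
        simpa using hre
      have hzero := (hasSum_zero_iff_of_nonneg
        (fun n => by positivity)).mp hsum3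
      intro n hn
      have := congrFun hzero ⟨n, hn⟩
      simpa [pow_eq_zero_iff] using this
    have hy₁mem : y₁ ∈ (Submodule.span ℂ (x '' (I \ {1})))ᗮ := by
      rw [Submodule.mem_orthogonal]
      intro u hu
      induction hu using Submodule.span_induction with
      | mem v hv =>
        obtain ⟨n, hn, rfl⟩ := hv
        exact horth n hn
      | zero => simp
      | add a b _ _ ha hb => rw [inner_add_left, ha, hb, add_zero]
      | smul r a _ ha => rw [inner_smul_left, ha, mul_zero]
    have htop : (Submodule.span ℂ (x '' (I \ {1}))).topologicalClosure = ⊤ :=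
      SetLike.ext' (by
        rw [Submodule.topologicalClosure_coe, hMRC.closure_eq]; rfl)
    have hbot : (Submodule.span ℂ (x '' (I \ {1})))ᗮ = ⊥ :=
      Submodule.topologicalClosure_eq_top_iff.mp htop
    have hy₁zero : y₁ = 0 := by
      rw [hbot] at hy₁mem
      simpa using hy₁mem
    have hx1 : x 1 = 0 := by rw [← hSy₁, hy₁zero, map_zero]
    rw [hc, hx1] at hceq
    simp at hceq
  -- the inverse of the reduced frame operator
  set Sinv' : H →L[ℂ] H := Sinv + (1 - c)⁻¹ •
    ((ContinuousLinearMap.toSpanSingleton ℂ y₁).comp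
      (((innerSL ℂ) (x 1)).comp Sinv)) with hSinv'
  have hSinv'app : ∀ h : H,
      Sinv' h = Sinv h + ((1 - c)⁻¹ * (inner ℂ (x 1) (Sinv h) : ℂ)) • y₁ := by
    intro h
    rw [hSinv']
    simp only [ContinuousLinearMap.add_apply, ContinuousLinearMap.smul_apply,
      ContinuousLinearMap.comp_apply, ContinuousLinearMap.toSpanSingleton_apply,
      innerSL_apply_apply, smul_smul]
  have hcne : (1 : ℂ) - c ≠ 0 := sub_ne_zero.mpr (Ne.symm hc1)
  refine ⟨S', Sinv', hS', ?_, ?_, ?_⟩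
  · -- Sinv' ∘ S' = id
    ext h
    have hS'h : S' h = S h - (inner ℂ (x 1) h : ℂ) • x 1 := by simp [hS'def, hTapp]
    have h2 : Sinv (S' h) = h - (inner ℂ (x 1) h : ℂ) • y₁ := by
      rw [hS'h, map_sub, hSinvS, map_smul]
    have h3 : (inner ℂ (x 1) (Sinv (S' h)) : ℂ) = (inner ℂ (x 1) h : ℂ) * (1 - c) := by
      rw [h2, inner_sub_right, inner_smul_right, ← hc]; ring
    simp only [ContinuousLinearMap.comp_apply, ContinuousLinearMap.coe_id', id_eq]
    rw [hSinv'app, h3, h2]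
    rw [show ((1 - c)⁻¹ * ((inner ℂ (x 1) h : ℂ) * (1 - c))) = (inner ℂ (x 1) h : ℂ) by
      field_simp]
    abel
  · -- S' ∘ Sinv' = id
    ext h
    set g : ℂ := inner ℂ (x 1) (Sinv h) with hg
    simp only [ContinuousLinearMap.comp_apply, ContinuousLinearMap.coe_id', id_eq]
    rw [hSinv'app, hS'def, ContinuousLinearMap.sub_apply, hTapp, map_add, map_smul,
      hSSinv, hSy₁, inner_add_right, inner_smul_right, ← hc, ← hg]
    have hcoef : ((1 - c)⁻¹ * g) - (g + (1 - c)⁻¹ * g * c) = 0 := by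
      field_simp; ring
    rw [show h + ((1 - c)⁻¹ * g) • x 1 - (g + (1 - c)⁻¹ * g * c) • x 1
        = h + (((1 - c)⁻¹ * g) - (g + (1 - c)⁻¹ * g * c)) • x 1 by
      rw [sub_smul]; abel]
    rw [hcoef, zero_smul, add_zero]
  · -- the formula for the dual vectors
    intro n hn
    have hnI : n ∈ I := hn.1
    have hyn : y n = Sinv (x n) := hyx n hnI
    have hy1 : y 1 = y₁ := hyx 1 h1
    show y n + ((inner ℂ (x 1) (y n) : ℂ) / (1 - (inner ℂ (x 1) (y 1) : ℂ))) • y 1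
        = Sinv' (x n)
    rw [hSinv'app, ← hyn, hy1, ← hc, div_eq_inv_mul]

end
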